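/- For fixed y ≥ 0 and 0 < r ≤ 1, the function λ ↦ M_P(λ + r(y − λ), λ) is non-decreasing with respect to λ on (0, y), and the function λ ↦ M_P(λ − r(λ − y), λ) is non-increasing with respect to λ on (y, ∞). -/

import Mathlib

/-- `M_P(z, λ) = z − λ + z·ln(λ/z)` for `z > 0, λ > 0`, with `M_P(0,λ) = −λ`
(realized by the same formula since `0 * log _ = 0`). -/
noncomputable def MP (z lam : ℝ) : ℝ := z - lam + z * Real.log (lam / z)

lemma mp_aux_deriv (r y lam : ℝ) (hlam : 0 < lam) (hz : 0 < (1 - r) * lam + r * y) :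
    HasDerivAt (fun t : ℝ => MP ((1 - r) * t + r * y) t)
      ((1 - r) * (Real.log lam - Real.log ((1 - r) * lam + r * y))
        + ((1 - r) * lam + r * y) / lam - 1) lam := by
  set z : ℝ := (1 - r) * lam + r * y with hzdef
  have hl : HasDerivAt (fun t : ℝ => (1 - r) * t + r * y) (1 - r) lam := by
    simpa using ((hasDerivAt_id lam).const_mul (1 - r)).add_const (r * y)
  have hlog : HasDerivAt Real.log lam⁻¹ lam := Real.hasDerivAt_log hlam.ne'
  have hlogz : HasDerivAt (fun t : ℝ => Real.log ((1 - r) * t + r * y))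
      (z⁻¹ * (1 - r)) lam := by
    have h := (Real.hasDerivAt_log hz.ne').comp lam hl
    exact h
  have h1 : HasDerivAt (fun t : ℝ => ((1 - r) * t + r * y) * Real.log t)
      ((1 - r) * Real.log lam + z * lam⁻¹) lam := hl.mul hlog
  have h2 : HasDerivAt (fun t : ℝ => ((1 - r) * t + r * y) * Real.log ((1 - r) * t + r * y))
      ((1 - r) * Real.log z + z * (z⁻¹ * (1 - r))) lam := hl.mul hlogz
  have hg : HasDerivAt (fun t : ℝ => ((1 - r) * t + r * y) - t
        + (((1 - r) * t + r * y) * Real.log t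
          - ((1 - r) * t + r * y) * Real.log ((1 - r) * t + r * y)))
      ((1 - r) - 1 + ((1 - r) * Real.log lam + z * lam⁻¹
        - ((1 - r) * Real.log z + z * (z⁻¹ * (1 - r))))) lam :=
    (hl.sub (hasDerivAt_id lam)).add (h1.sub h2)
  have hev : ∀ᶠ t in nhds lam, 0 < t ∧ 0 < (1 - r) * t + r * y := by
    have a1 : ∀ᶠ t in nhds lam, 0 < t := eventually_gt_nhds hlam
    have hc : Continuous (fun t : ℝ => (1 - r) * t + r * y) := by continuity
    have a2 : ∀ᶠ t in nhds lam, 0 < (1 - r) * t + r * y :=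
      (hc.tendsto lam).eventually (eventually_gt_nhds hz)
    exact a1.and a2
  have heq : (fun t : ℝ => MP ((1 - r) * t + r * y) t) =ᶠ[nhds lam]
      (fun t : ℝ => ((1 - r) * t + r * y) - t
        + (((1 - r) * t + r * y) * Real.log t
          - ((1 - r) * t + r * y) * Real.log ((1 - r) * t + r * y))) := by
    filter_upwards [hev] with t ht
    simp only [MP]
    rw [Real.log_div ht.1.ne' ht.2.ne']
    ring
  have := hg.congr_of_eventuallyEq heq
  convert this using 1 <;> try rfl
  field_simp
  ring

/-- For fixed `y ≥ 0` and `0 < r ≤ 1`, the map `λ ↦ M_P(λ + r(y − λ), λ)` is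
non-decreasing on `(0, y)` and the map `λ ↦ M_P(λ − r(λ − y), λ)` is
non-increasing on `(y, ∞)`. -/
theorem mp_shift_monotone (y r : ℝ) (hy : 0 ≤ y) (hr0 : 0 < r) (hr1 : r ≤ 1) :
    MonotoneOn (fun lam : ℝ => MP (lam + r * (y - lam)) lam) (Set.Ioo 0 y) ∧
      AntitoneOn (fun lam : ℝ => MP (lam - r * (lam - y)) lam) (Set.Ioi y) := by
  constructor
  · -- monotone part
    have hfun : (fun lam : ℝ => MP (lam + r * (y - lam)) lam)
        = fun lam : ℝ => MP ((1 - r) * lam + r * y) lam := by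
      funext t
      have h : t + r * (y - t) = (1 - r) * t + r * y := by ring
      rw [h]
    rw [hfun]
    have key : ∀ x ∈ Set.Ioo (0 : ℝ) y,
        HasDerivAt (fun t : ℝ => MP ((1 - r) * t + r * y) t)
          ((1 - r) * (Real.log x - Real.log ((1 - r) * x + r * y))
            + ((1 - r) * x + r * y) / x - 1) x := by
      intro x hx
      have hz : 0 < (1 - r) * x + r * y := by nlinarith [hx.1, hx.2]
      exact mp_aux_deriv r y x hx.1 hz
    apply monotoneOn_of_deriv_nonneg (convex_Ioo 0 y)
    · intro x hx
      exact ((key x hx).continuousAt).continuousWithinAt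
    · intro x hx
      rw [isOpen_Ioo.interior_eq] at hx
      exact ((key x hx).differentiableAt).differentiableWithinAt
    · intro x hx
      rw [isOpen_Ioo.interior_eq] at hx
      rw [(key x hx).deriv]
      set z : ℝ := (1 - r) * x + r * y with hzdef
      have hx0 : 0 < x := hx.1
      have hz0 : 0 < z := by nlinarith [hx.1, hx.2]
      have hxz : x ≤ z := by nlinarith [hx.2]
      have hlog_le : Real.log (z / x) ≤ z / x - 1 :=
        Real.log_le_sub_one_of_pos (by positivity)
      rw [Real.log_div hz0.ne' hx0.ne'] at hlog_le
      have hlog_nonneg : 0 ≤ Real.log z - Real.log x := by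
        have := Real.log_le_log hx0 hxz
        linarith
      -- d = (1-r)*(log x - log z) + z/x - 1 ≥ -(log z - log x) + z/x - 1 ≥ 0
      have h1 : (1 - r) * (Real.log x - Real.log z) ≥ -(Real.log z - Real.log x) := by
        nlinarith [hlog_nonneg]
      linarith
  · -- antitone part
    by_cases hcase : r = 1 ∧ y = 0
    · obtain ⟨hr, hy0⟩ := hcase
      subst hr; subst hy0
      have hval : ∀ t : ℝ, MP (t - 1 * (t - 0)) t = -t := by
        intro t
        simp [MP]
      intro a ha b hb hab
      simp only [hval]
      linarith
    · have hfun : (fun lam : ℝ => MP (lam - r * (lam - y)) lam)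
          = fun lam : ℝ => MP ((1 - r) * lam + r * y) lam := by
        funext t
        have h : t - r * (t - y) = (1 - r) * t + r * y := by ring
        rw [h]
      rw [hfun]
      have hzpos : ∀ x : ℝ, y < x → 0 < (1 - r) * x + r * y := by
        intro x hx
        rcases hy.lt_or_eq with hy' | hy'
        · nlinarith
        · have : r ≠ 1 := fun h => hcase ⟨h, hy'.symm⟩
          have hr1' : r < 1 := lt_of_le_of_ne hr1 this
          nlinarith
      have key : ∀ x ∈ Set.Ioi y,
          HasDerivAt (fun t : ℝ => MP ((1 - r) * t + r * y) t)
            ((1 - r) * (Real.log x - Real.log ((1 - r) * x + r * y))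
              + ((1 - r) * x + r * y) / x - 1) x := by
        intro x hx
        have hx' : y < x := hx
        exact mp_aux_deriv r y x (lt_of_le_of_lt hy hx') (hzpos x hx')
      apply antitoneOn_of_deriv_nonpos (convex_Ioi y)
      · intro x hx
        exact ((key x hx).continuousAt).continuousWithinAt
      · intro x hx
        rw [isOpen_Ioi.interior_eq] at hx
        exact ((key x hx).differentiableAt).differentiableWithinAt
      · intro x hx
        rw [isOpen_Ioi.interior_eq] at hx
        rw [(key x hx).deriv]
        set z : ℝ := (1 - r) * x + r * y with hzdef
        have hx' : y < x := hx
        have hx0 : 0 < x := lt_of_le_of_lt hy hx'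
        have hz0 : 0 < z := hzpos x hx'
        have hzx : z ≤ x := by nlinarith
        have hcz : (1 - r) * x ≤ z := by nlinarith
        have hlog_le : Real.log (x / z) ≤ x / z - 1 :=
          Real.log_le_sub_one_of_pos (by positivity)
        rw [Real.log_div hx0.ne' hz0.ne'] at hlog_le
        have hb : 0 ≤ Real.log x - Real.log z := by
          have := Real.log_le_log hz0 hzx
          linarith
        -- (1-r)*(log x - log z) ≤ (1-r)*((x-z)/z) ≤ (x-z)/x
        have h1 : (1 - r) * (Real.log x - Real.log z) ≤ (1 - r) * ((x - z) / z) := by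
          apply mul_le_mul_of_nonneg_left _ (by linarith)
          have : x / z - 1 = (x - z) / z := by field_simp
          linarith [hlog_le, this]
        have h2 : (1 - r) * ((x - z) / z) ≤ (x - z) / x := by
          rw [mul_div_assoc', div_le_div_iff₀ hz0 hx0]
          nlinarith
        have h3 : (x - z) / x + z / x - 1 = 0 := by field_simp; ring
        linarith
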